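/- Let A ∈ ℝ^{n×n} be symmetric positive semidefinite with Ae = 0, where e is the all-ones vector. Let μ ∈ ℝⁿ be entrywise positive with Σμᵢ = 1. Define λ = min{xᵀAx : ‖x‖₂ = 1, xᵀe = 0} and λ^{(μ)} = min{xᵀAx : ‖x‖₂ = 1, xᵀμ = 0}. Then λ^{(μ)} ≥ λ / (n ‖μ‖₂²). -/

import Mathlib

open Matrix BigOperators Finset

/-- Let `A` be symmetric PSD with `Ae = 0`, `μ` entrywise positive
with `Σμᵢ = 1`. With `λ = min{xᵀAx : ‖x‖₂=1, xᵀe=0}` and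
`λ^{(μ)} = min{xᵀAx : ‖x‖₂=1, xᵀμ=0}`, one has `λ^{(μ)} ≥ λ/(n‖μ‖₂²)`. -/
theorem weighted_orthogonal_rayleigh_lower_bound
    {n : ℕ} (A : Matrix (Fin n) (Fin n) ℝ)
    (hA : A.PosSemidef)
    (hAe : A.mulVec (fun _ => (1 : ℝ)) = 0)
    (μ : Fin n → ℝ) (hμpos : ∀ i, 0 < μ i) (hμsum : ∑ i, μ i = 1)
    (lam lamμ : ℝ)
    (hlam : IsLeast {r : ℝ | ∃ x : Fin n → ℝ,
        (∑ i, (x i) ^ 2 = 1) ∧ (∑ i, x i = 0) ∧ r = x ⬝ᵥ A.mulVec x} lam)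
    (hlamμ : IsLeast {r : ℝ | ∃ x : Fin n → ℝ,
        (∑ i, (x i) ^ 2 = 1) ∧ (∑ i, x i * μ i = 0) ∧ r = x ⬝ᵥ A.mulVec x} lamμ) :
    lam / (n * ∑ i, (μ i) ^ 2) ≤ lamμ := by
  obtain ⟨x, hx1, hx2, hx3⟩ := hlamμ.1
  have hn : 0 < (n : ℝ) := by
    rcases Nat.eq_zero_or_pos n with h | h
    · exfalso; subst h; simpa using hμsum
    · exact_mod_cast h
  have hnpos : 0 < n := by exact_mod_cast hn
  haveI : Nonempty (Fin n) := ⟨⟨0, hnpos⟩⟩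
  set M := ∑ i, (μ i) ^ 2 with hMdef
  have hMpos : 0 < M :=
    Finset.sum_pos (fun i _ => pow_pos (hμpos i) 2) Finset.univ_nonempty
  have hlam0 : 0 ≤ lam := by
    obtain ⟨x0, _, _, hx03⟩ := hlam.1
    have := hA.dotProduct_mulVec_nonneg x0
    rw [hx03]; simpa using this
  set s := ∑ i, x i with hsdef
  set d := s / n with hddef
  set y : Fin n → ℝ := fun i => x i - d with hydef
  have hyx : y = x - d • (fun _ => (1 : ℝ)) := by
    funext i; simp [hydef]
  have hysum : ∑ i, y i = 0 := by
    simp only [hydef, Finset.sum_sub_distrib, Finset.sum_const, Finset.card_univ,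
      Fintype.card_fin, nsmul_eq_mul, hddef]
    field_simp
    rw [hsdef, sub_self]
  have hAy : A.mulVec y = A.mulVec x := by
    rw [hyx, Matrix.mulVec_sub, Matrix.mulVec_smul, hAe, smul_zero, sub_zero]
  have hsym : Aᵀ = A := hA.1
  have heAx : (fun _ : Fin n => (1 : ℝ)) ⬝ᵥ A.mulVec x = 0 := by
    rw [Matrix.dotProduct_mulVec, ← hsym, Matrix.vecMul_transpose, hAe]
    simp
  have hyAy : y ⬝ᵥ A.mulVec y = x ⬝ᵥ A.mulVec x := by
    rw [hAy, hyx, sub_dotProduct, smul_dotProduct, heAx, smul_zero, sub_zero]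
  set N := ∑ i, (y i) ^ 2 with hNdef
  have hN : N = 1 - s ^ 2 / n := by
    have h1 : ∀ i : Fin n, (y i) ^ 2 = (x i) ^ 2 - 2 * d * x i + d ^ 2 := fun i => by
      simp only [hydef]; ring
    rw [hNdef]
    simp_rw [h1]
    rw [Finset.sum_add_distrib, Finset.sum_sub_distrib, ← Finset.mul_sum, hx1, ← hsdef,
      Finset.sum_const, Finset.card_univ, Fintype.card_fin, nsmul_eq_mul, hddef]
    field_simp
    ring
  have hs : s = ∑ i, x i * (1 - μ i / M) := by
    have h1 : ∀ i : Fin n, x i * (1 - μ i / M) = x i - (x i * μ i) * (1 / M) := fun i => by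
      field_simp
    simp_rw [h1]
    rw [Finset.sum_sub_distrib, ← Finset.sum_mul, hx2]
    simp [hsdef]
  have hq : ∑ i, (1 - μ i / M) ^ 2 = n - 1 / M := by
    have h1 : ∀ i : Fin n, (1 - μ i / M) ^ 2 = 1 - (2 / M) * μ i + (μ i) ^ 2 * (1 / M ^ 2) :=
      fun i => by field_simp; ring
    simp_rw [h1]
    rw [Finset.sum_add_distrib, Finset.sum_sub_distrib, ← Finset.mul_sum, hμsum,
      ← Finset.sum_mul, ← hMdef, Finset.sum_const, Finset.card_univ, Fintype.card_fin,
      nsmul_eq_mul, mul_one]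
    field_simp
    ring
  have hs2 : s ^ 2 ≤ n - 1 / M := by
    have hcs := Finset.sum_mul_sq_le_sq_mul_sq Finset.univ x (fun i => 1 - μ i / M)
    rw [← hs, hx1, one_mul, hq] at hcs
    exact hcs
  have key : s ^ 2 * M ≤ n * M - 1 := by
    rw [← le_div_iff₀ hMpos]
    calc s ^ 2 ≤ n - 1 / M := hs2
    _ = (n * M - 1) / M := by field_simp
  have hNge : 1 / (n * M) ≤ N := by
    rw [hN, div_le_iff₀ (mul_pos hn hMpos)]
    have hsn : s ^ 2 / n * n = s ^ 2 := by field_simp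
    nlinarith [key]
  have hNpos : 0 < N := lt_of_lt_of_le (by positivity) hNge
  set c := (Real.sqrt N)⁻¹ with hcdef
  have hsq : Real.sqrt N ^ 2 = N := Real.sq_sqrt hNpos.le
  have hc2 : c ^ 2 = N⁻¹ := by rw [hcdef, inv_pow, hsq]
  set z : Fin n → ℝ := c • y with hzdef
  have hz1 : ∑ i, (z i) ^ 2 = 1 := by
    simp only [hzdef, Pi.smul_apply, smul_eq_mul, mul_pow]
    rw [← Finset.mul_sum, ← hNdef, hc2]
    exact inv_mul_cancel₀ hNpos.ne'
  have hz2 : ∑ i, z i = 0 := by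
    simp only [hzdef, Pi.smul_apply, smul_eq_mul]
    rw [← Finset.mul_sum, hysum, mul_zero]
  have hzAz : z ⬝ᵥ A.mulVec z = N⁻¹ * lamμ := by
    rw [hzdef, Matrix.mulVec_smul, smul_dotProduct, dotProduct_smul,
      smul_eq_mul, smul_eq_mul, ← mul_assoc, ← sq, hc2, hyAy, ← hx3]
  have hle : lam ≤ N⁻¹ * lamμ := by
    rw [← hzAz]
    exact hlam.2 ⟨z, hz1, hz2, rfl⟩
  calc lam / (n * M) = lam * (1 / (n * M)) := by ring
  _ ≤ lam * N := mul_le_mul_of_nonneg_left hNge hlam0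
  _ ≤ lamμ := by
      have := mul_le_mul_of_nonneg_right hle hNpos.le
      rw [mul_comm N⁻¹ lamμ, mul_assoc, inv_mul_cancel₀ hNpos.ne', mul_one] at this
      linarith
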